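/- arXiv:1910.00670 — 6 statements merged into one kernel-verified Lean document; each statement's English description precedes it below -/
import Mathlib

section
/- Let Γ be a finite connected simple graph and let T be a collection of tubes of Γ. Then T is a tubing of Γ if and only if T is a topological basis on the vertex set of Γ such that the following connectivity condition holds: for every pair of vertices {v,v'}, if {v,v'} is an edge of Γ or an edge of the reconnected complement Γ_t^* for some t ∈ T, then the two-point set {v,v'} is topologically connected as a subspace in the topology generated by T. -/
open scoped Classical
open TensorProduct

noncomputable section

/-- A finite simple graph whose vertices are a finite set of (totally ordered) naturals. -/
structure FinGraph : Type where
  verts : Finset ℕ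
  Adj : ℕ → ℕ → Prop
  symm : ∀ v w, Adj v w → Adj w v
  loopless : ∀ v, ¬ Adj v v
  support : ∀ v w, Adj v w → v ∈ verts ∧ w ∈ verts

namespace CDTub

/-- Connectivity of a vertex set within a graph: any two of its vertices are joined by a
walk staying inside the set. -/
def VConn (G : FinGraph) (s : Finset ℕ) : Prop :=
  ∀ v ∈ s, ∀ w ∈ s, Relation.ReflTransGen (fun a b => a ∈ s ∧ b ∈ s ∧ G.Adj a b) v w

/-- A tube: a nonempty set of vertices inducing a connected subgraph. -/
def IsTube (G : FinGraph) (t : Finset ℕ) : Prop :=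
  t.Nonempty ∧ t ⊆ G.verts ∧ VConn G t

/-- A connected (nonempty) graph: the universal tube is a tube. -/
def IsConnGraph (G : FinGraph) : Prop := IsTube G G.verts

/-- Two vertex sets are far apart: disjoint and with no edge between them. -/
def FarApart (G : FinGraph) (a b : Finset ℕ) : Prop :=
  Disjoint a b ∧ ¬ ∃ v ∈ a, ∃ w ∈ b, G.Adj v w

/-- Compatible tubes: nested or far apart. -/
def Compatible (G : FinGraph) (a b : Finset ℕ) : Prop :=
  a ⊆ b ∨ b ⊆ a ∨ FarApart G a b

/-- Linked tubes: disjoint and joined by an edge. -/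
def Linked (G : FinGraph) (a b : Finset ℕ) : Prop :=
  Disjoint a b ∧ ∃ v ∈ a, ∃ w ∈ b, G.Adj v w

/-- A tubing of a connected graph: pairwise compatible tubes containing the universal tube. -/
def IsTubing (G : FinGraph) (T : Finset (Finset ℕ)) : Prop :=
  G.verts ∈ T ∧ (∀ t ∈ T, IsTube G t) ∧
    ∀ t ∈ T, ∀ t' ∈ T, t ≠ t' → Compatible G t t'

/-- Induced subgraph on a set of vertices. -/
def induce (G : FinGraph) (t : Finset ℕ) : FinGraph where
  verts := t
  Adj v w := v ∈ t ∧ w ∈ t ∧ G.Adj v w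
  symm := fun v w h => ⟨h.2.1, h.1, G.symm v w h.2.2⟩
  loopless := fun v h => G.loopless v h.2.2
  support := fun _ _ h => ⟨h.1, h.2.1⟩

/-- Simultaneous reconnected complement with respect to a family `F` of tubes
(for a single tube, or a family of pairwise far apart tubes, this is the (iterated)
reconnected complement). -/
def reconnAll (G : FinGraph) (F : Finset (Finset ℕ)) : FinGraph where
  verts := G.verts \ F.biUnion id
  Adj v w := v ≠ w ∧ v ∈ G.verts \ F.biUnion id ∧ w ∈ G.verts \ F.biUnion id ∧
    (G.Adj v w ∨ ∃ f ∈ F, (∃ u ∈ f, G.Adj v u) ∧ ∃ u' ∈ f, G.Adj w u')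
  symm := by
    rintro v w ⟨hne, hv, hw, h⟩
    refine ⟨hne.symm, hw, hv, ?_⟩
    rcases h with h | ⟨f, hf, h1, h2⟩
    · exact Or.inl (G.symm _ _ h)
    · exact Or.inr ⟨f, hf, h2, h1⟩
  loopless := fun v h => h.1 rfl
  support := fun _ _ h => ⟨h.2.1, h.2.2.1⟩

/-- Reconnected complement `Γ_t^*` of a graph with respect to a tube. -/
def reconn (G : FinGraph) (t : Finset ℕ) : FinGraph := reconnAll G {t}

/-- The proper tubes of a tubing. -/
def properTubes (G : FinGraph) (T : Finset (Finset ℕ)) : Finset (Finset ℕ) :=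
  T.filter (fun s => s ≠ G.verts)

/-- The maximal proper tubes of a tubing. -/
def MaxtP (G : FinGraph) (T : Finset (Finset ℕ)) : Finset (Finset ℕ) :=
  (properTubes G T).filter (fun s => ∀ s' ∈ properTubes G T, s ⊆ s' → s = s')

/-- The iterated reconnected complement `Γ_T^*` with respect to the maximal proper tubes. -/
def gammaStar (G : FinGraph) (T : Finset (Finset ℕ)) : FinGraph :=
  reconnAll G (MaxtP G T)

/-- Restriction `T|_t` of a tubing to a tube. -/
def restrictT (T : Finset (Finset ℕ)) (t : Finset ℕ) : Finset (Finset ℕ) :=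
  T.filter (fun s => s ⊆ t)

/-- For a tube `s` of `Γ_T^*`, the tube `s̃` of `Γ`: the union of `s` with all maximal
proper tubes of `T` linked to `s`. -/
def tildeT (G : FinGraph) (T : Finset (Finset ℕ)) (s : Finset ℕ) : Finset ℕ :=
  s ∪ ((MaxtP G T).filter (fun m => Linked G m s)).biUnion id

/-- Substitution `T •_Γ S` of a tubing `S` of `Γ_T^*` into the tubing `T`. -/
def substT (G : FinGraph) (T S : Finset (Finset ℕ)) : Finset (Finset ℕ) :=
  T ∪ S.image (tildeT G T)

/-- The `t`-substitution `γ_t(T;S) = T ∪ (T|_t •_{Γ_t} S)`. -/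
def gammaSub (G : FinGraph) (T : Finset (Finset ℕ)) (t : Finset ℕ)
    (S : Finset (Finset ℕ)) : Finset (Finset ℕ) :=
  T ∪ substT (induce G t) (restrictT T t) S

/-- The tubing `T_t^*` induced on the reconnected complement `Γ_t^*`. -/
def indStar (T : Finset (Finset ℕ)) (t : Finset ℕ) : Finset (Finset ℕ) :=
  T.filter (fun s => Disjoint s t) ∪ (T.filter (fun s => t ⊂ s)).image (fun s => s \ t)

/-- The operation `T ◇ S` of Definition 2.4(2). -/
def diamond (G : FinGraph) (T : Finset (Finset ℕ)) (t : Finset ℕ)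
    (S : Finset (Finset ℕ)) : Finset (Finset ℕ) :=
  T ∪ S.filter (fun s => ¬ Linked G s t) ∪
    (S.filter (fun s => Linked G s t)).image (fun s => s ∪ t)

/-- The tubes of `T`, viewed as subsets of the subtype of vertices. -/
def tubeSets (G : FinGraph) (T : Finset (Finset ℕ)) : Set (Set {x // x ∈ G.verts}) :=
  {U | ∃ t ∈ T, U = {x : {x // x ∈ G.verts} | (x : ℕ) ∈ t}}

/-- The topology on the vertex set generated by the tubes of `T`. -/
def tubingTop (G : FinGraph) (T : Finset (Finset ℕ)) :
    TopologicalSpace {x // x ∈ G.verts} :=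
  TopologicalSpace.generateFrom (tubeSets G T)

/-- One-line notation of the permutation `σ_t`: the vertices of `t` in increasing order
followed by the remaining vertices in increasing order. -/
def sigmaList (X t : Finset ℕ) : List ℕ :=
  t.sort (· ≤ ·) ++ (X \ t).sort (· ≤ ·)

/-- Number of `Γ`-inversions of a permutation given by its one-line notation `l`:
pairs of positions `p < q` carrying values `a > b` which form an edge of `Γ`. -/
def invCount (G : FinGraph) (l : List ℕ) : ℕ :=
  ((Finset.range l.length ×ˢ Finset.range l.length).filter
    (fun pq => pq.1 < pq.2 ∧ l.getD pq.2 0 < l.getD pq.1 0 ∧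
      G.Adj (l.getD pq.1 0) (l.getD pq.2 0))).card

/-- The signature `sgn^Γ(σ) = (-1)^{inv_Γ(σ)}`. -/
def graphSgn (G : FinGraph) (l : List ℕ) : ℤ := (-1) ^ invCount G l

/-- Rank (1-based) of `v` inside a finite set `X` of naturals: the order-preserving
relabelling of `X` by `{1,…,|X|}`. -/
def rk (X : Finset ℕ) (v : ℕ) : ℕ := (X.filter (fun u => u ≤ v)).card

/-- Order-preserving relabelling of a graph by the initial segment `{1,…,n}`. -/
def relabelG (G : FinGraph) : FinGraph where
  verts := G.verts.image (rk G.verts)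
  Adj i j := i ≠ j ∧ ∃ v w, G.Adj v w ∧ i = rk G.verts v ∧ j = rk G.verts w
  symm := by
    rintro i j ⟨hne, v, w, h, hi, hj⟩
    exact ⟨hne.symm, w, v, G.symm _ _ h, hj, hi⟩
  loopless := fun _ h => h.1 rfl
  support := by
    rintro i j ⟨hne, v, w, h, hi, hj⟩
    exact ⟨Finset.mem_image.mpr ⟨v, (G.support _ _ h).1, hi.symm⟩,
      Finset.mem_image.mpr ⟨w, (G.support _ _ h).2, hj.symm⟩⟩

/-- Order-preserving relabelling of a subset of `X`. -/
def relabelF (X t : Finset ℕ) : Finset ℕ := t.image (rk X)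

/-- Order-preserving relabelling of a family of subsets of `X`. -/
def relabelT (X : Finset ℕ) (T : Finset (Finset ℕ)) : Finset (Finset ℕ) :=
  T.image (relabelF X)

/-- Connected components (in `G`) of a set of vertices. -/
def comps (G : FinGraph) (s : Finset ℕ) : Finset (Finset ℕ) :=
  s.image (fun v => s.filter (fun w =>
    Relation.ReflTransGen (fun a b => a ∈ s ∧ b ∈ s ∧ G.Adj a b) v w))

/-- The restriction map `res_Ω^Γ` on tubings: replace each tube by its connected
components in `Ω`. -/
def resT (Om : FinGraph) (T : Finset (Finset ℕ)) : Finset (Finset ℕ) :=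
  T.biUnion (comps Om)

/-- Shift of a vertex set by `n`. -/
def shiftF (n : ℕ) (s : Finset ℕ) : Finset ℕ := s.image (fun v => v + n)

/-- Shift of a family of vertex sets by `n`. -/
def shiftT (n : ℕ) (S : Finset (Finset ℕ)) : Finset (Finset ℕ) := S.image (shiftF n)

/-- Shift of a graph by `n`. -/
def shiftG (n : ℕ) (G : FinGraph) : FinGraph where
  verts := shiftF n G.verts
  Adj v w := ∃ a b, G.Adj a b ∧ v = a + n ∧ w = b + n
  symm := by
    rintro v w ⟨a, b, h, rfl, rfl⟩
    exact ⟨b, a, G.symm _ _ h, rfl, rfl⟩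
  loopless := by
    rintro v ⟨a, b, h, ha, hb⟩
    have : a = b := by omega
    exact G.loopless b (this ▸ h)
  support := by
    rintro v w ⟨a, b, h, rfl, rfl⟩
    exact ⟨Finset.mem_image.mpr ⟨a, (G.support _ _ h).1, rfl⟩,
      Finset.mem_image.mpr ⟨b, (G.support _ _ h).2, rfl⟩⟩

/-- `X_T` : the vertices belonging to no proper tube of `T`. -/
def freeVerts (G : FinGraph) (T : Finset (Finset ℕ)) : Finset ℕ :=
  G.verts.filter (fun v => ∀ s ∈ T, s ≠ G.verts → v ∉ s)

/-- The endpoint `max X_T` of the joining edge. -/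
def joinA (G : FinGraph) (T : Finset (Finset ℕ)) : ℕ :=
  WithBot.unbotD 0 (freeVerts G T).max

/-- The endpoint `n + min X_S` of the joining edge. -/
def joinB (Om : FinGraph) (S : Finset (Finset ℕ)) (n : ℕ) : ℕ :=
  n + WithTop.untopD 0 (freeVerts Om S).min

/-- Vertex set of the joined graph `Γ ∪_{T,S} Ω`. -/
def joinVerts (G Om : FinGraph) (n : ℕ) : Finset ℕ := G.verts ∪ shiftF n Om.verts

/-- The joined graph `Γ ∪_{T,S} Ω`: the disjoint union (with `Ω` shifted by `n`)
plus one edge from `max X_T` to `n + min X_S`. -/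
def joinG (G Om : FinGraph) (T S : Finset (Finset ℕ)) (n : ℕ) : FinGraph where
  verts := joinVerts G Om n
  Adj v w := G.Adj v w ∨ (shiftG n Om).Adj v w ∨
    (v ≠ w ∧ v ∈ joinVerts G Om n ∧ w ∈ joinVerts G Om n ∧
      ((v = joinA G T ∧ w = joinB Om S n) ∨ (w = joinA G T ∧ v = joinB Om S n)))
  symm := by
    rintro v w (h | h | ⟨hne, hv, hw, hc⟩)
    · exact Or.inl (G.symm _ _ h)
    · exact Or.inr (Or.inl ((shiftG n Om).symm _ _ h))
    · exact Or.inr (Or.inr ⟨hne.symm, hw, hv, hc.symm⟩)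
  loopless := by
    rintro v (h | h | ⟨hne, _⟩)
    · exact G.loopless v h
    · exact (shiftG n Om).loopless v h
    · exact hne rfl
  support := by
    rintro v w (h | h | ⟨_, hv, hw, _⟩)
    · exact ⟨Finset.mem_union_left _ (G.support _ _ h).1,
        Finset.mem_union_left _ (G.support _ _ h).2⟩
    · exact ⟨Finset.mem_union_right _ ((shiftG n Om).support _ _ h).1,
        Finset.mem_union_right _ ((shiftG n Om).support _ _ h).2⟩
    · exact ⟨hv, hw⟩

/-- `T ▷ S`. -/
def trR (G Om : FinGraph) (T S : Finset (Finset ℕ)) (n : ℕ) : Finset (Finset ℕ) :=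
  T ∪ shiftT n (properTubes Om S) ∪ {joinVerts G Om n}

/-- `T ◁ S`. -/
def trL (G Om : FinGraph) (T S : Finset (Finset ℕ)) (n : ℕ) : Finset (Finset ℕ) :=
  properTubes G T ∪ shiftT n S ∪ {joinVerts G Om n}

/-- `T ⊥ S`. -/
def tPerp (G Om : FinGraph) (T S : Finset (Finset ℕ)) (n : ℕ) : Finset (Finset ℕ) :=
  properTubes G T ∪ shiftT n (properTubes Om S) ∪ {joinVerts G Om n}

/-- Equality of graphs: same vertex set and same edges. -/
def GEq (A B : FinGraph) : Prop :=
  A.verts = B.verts ∧ ∀ v w, A.Adj v w ↔ B.Adj v w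

/-- Index type for the basis of `Tub⁺`: `none` is the unit `1`, `some (Γ,T)` is a pair. -/
abbrev TubIdx : Type := Option (FinGraph × Finset (Finset ℕ))

/-- A pair `(Γ,T)` relabelled order-preservingly to standard vertex set, identified
with the unit `1` when the vertex set is empty. -/
def embPair (G : FinGraph) (T : Finset (Finset ℕ)) : TubIdx :=
  if G.verts = ∅ then none else some (relabelG G, relabelT G.verts T)

/-- The value of the pre-Lie coproduct `Δ_•` on a basis element. -/
def deltaFun (K : Type) [CommRing K] (i : TubIdx) :
    (TubIdx →₀ K) ⊗[K] (TubIdx →₀ K) :=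
  match i with
  | none => Finsupp.single (none : TubIdx) (1 : K) ⊗ₜ[K] Finsupp.single (none : TubIdx) (1 : K)
  | some (G, T) =>
      (∑ t ∈ T, (Finsupp.single (embPair (induce G t) (restrictT T t)) (1 : K)) ⊗ₜ[K]
        (Finsupp.single (embPair (reconn G t) (indStar T t)) (1 : K)))
      + (Finsupp.single (none : TubIdx) (1 : K)) ⊗ₜ[K]
          (Finsupp.single (some (G, T) : TubIdx) (1 : K))

/-- The pre-Lie coproduct `Δ_•` on `Tub⁺`, the free module on `TubIdx`. -/
def delta (K : Type) [CommRing K] :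
    (TubIdx →₀ K) →ₗ[K] (TubIdx →₀ K) ⊗[K] (TubIdx →₀ K) :=
  Finsupp.lift ((TubIdx →₀ K) ⊗[K] (TubIdx →₀ K)) K TubIdx (deltaFun K)

end CDTub

namespace CDTub

variable {G : FinGraph} {T : Finset (Finset ℕ)}

/-- Crossing lemma: a walk from inside `P` to outside `P` has a step crossing out. -/
lemma crossEdge {r : ℕ → ℕ → Prop} {P : ℕ → Prop} {x y : ℕ}
    (h : Relation.ReflTransGen r x y) (hx : P x) : ¬ P y →
    ∃ q p, P q ∧ ¬ P p ∧ r q p := by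
  induction h with
  | refl => exact fun hy => absurd hx hy
  | @tail b c h1 h2 ih =>
    intro hy
    by_cases hb : P b
    · exact ⟨b, c, hb, hy, h2⟩
    · exact ih hb

/-- A tubing gives a topological basis. -/
lemma basis_of_tubing (hT : ∀ t ∈ T, IsTube G t) (hmem : G.verts ∈ T)
    (hcompat : ∀ t ∈ T, ∀ t' ∈ T, t ≠ t' → Compatible G t t') :
    @TopologicalSpace.IsTopologicalBasis {x // x ∈ G.verts} (tubingTop G T)
      (tubeSets G T) := by
  letI : TopologicalSpace {x // x ∈ G.verts} := tubingTop G T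
  refine ⟨?_, ?_, rfl⟩
  · rintro U ⟨a, ha, rfl⟩ V ⟨b, hb, rfl⟩ x ⟨hxa, hxb⟩
    by_cases hab : a = b
    · subst hab; exact ⟨_, ⟨a, ha, rfl⟩, hxa, fun y hy => ⟨hy, hy⟩⟩
    rcases hcompat a ha b hb hab with h | h | h
    · exact ⟨_, ⟨a, ha, rfl⟩, hxa, fun y hy => ⟨hy, h hy⟩⟩
    · exact ⟨_, ⟨b, hb, rfl⟩, hxb, fun y hy => ⟨h hy, hy⟩⟩
    · exact absurd hxb (Finset.disjoint_left.mp h.1 hxa)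
  · apply Set.eq_univ_of_forall
    intro x
    exact Set.mem_sUnion.mpr ⟨_, ⟨G.verts, hmem, rfl⟩, x.2⟩

/-- In a tubing, two vertices joined by an edge of `Γ` or of a reconnected complement
cannot be separated by a pair of tubes. -/
lemma no_sep_of_tubing (hcompat : ∀ t ∈ T, ∀ t' ∈ T, t ≠ t' → Compatible G t t')
    {v w : ℕ} (hadj : G.Adj v w ∨ ∃ t ∈ T, (reconn G t).Adj v w) {a b : Finset ℕ}
    (ha : a ∈ T) (hb : b ∈ T) (hva : v ∈ a) (hwa : w ∉ a) (hwb : w ∈ b) (hvb : v ∉ b) :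
    False := by
  have hab : a ≠ b := fun h => hvb (h ▸ hva)
  rcases hcompat a ha b hb hab with h | h | h
  · exact hvb (h hva)
  · exact hwa (h hwb)
  obtain ⟨hdisj, hnoedge⟩ := h
  rcases hadj with hG | ⟨t, htT, hradj⟩
  · exact hnoedge ⟨v, hva, w, hwb, hG⟩
  obtain ⟨hne, hvmem, hwmem, hor⟩ := hradj
  rcases hor with hG | ⟨f, hf, ⟨u, hu, hvu⟩, ⟨u', hu', hwu'⟩⟩
  · exact hnoedge ⟨v, hva, w, hwb, hG⟩
  have hft : f = t := Finset.mem_singleton.mp hf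
  subst hft
  have hvf : v ∉ f := by
    intro hvf
    exact (Finset.mem_sdiff.mp hvmem).2
      (Finset.mem_biUnion.mpr ⟨f, Finset.mem_singleton_self f, hvf⟩)
  have hwf : w ∉ f := by
    intro hwf
    exact (Finset.mem_sdiff.mp hwmem).2
      (Finset.mem_biUnion.mpr ⟨f, Finset.mem_singleton_self f, hwf⟩)
  have hfa : f ⊆ a := by
    rcases hcompat f htT a ha (fun h => hvf (h.symm ▸ hva)) with h | h | h
    · exact h
    · exact absurd (h hva) hvf
    · exact absurd ⟨u, hu, v, hva, G.symm v u hvu⟩ h.2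
  have hfb : f ⊆ b := by
    rcases hcompat f htT b hb (fun h => hwf (h.symm ▸ hwb)) with h | h | h
    · exact h
    · exact absurd (h hwb) hwf
    · exact absurd ⟨u', hu', w, hwb, G.symm w u' hwu'⟩ h.2
  exact Finset.disjoint_left.mp hdisj (hfa hu) (hfb hu)

/-- Separation lemma: if the two-point set `{v,w}` is topologically connected, then
`v` and `w` cannot be separated by a pair of tubes. -/
lemma sep_lemma
    (hconn : ∀ v w : ℕ, (G.Adj v w ∨ ∃ t ∈ T, (reconn G t).Adj v w) →
      @IsConnected {x // x ∈ G.verts} (tubingTop G T)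
        {x : {x // x ∈ G.verts} | (x : ℕ) = v ∨ (x : ℕ) = w})
    {v w : ℕ} (hadj : G.Adj v w ∨ ∃ t ∈ T, (reconn G t).Adj v w)
    (hv : v ∈ G.verts) (hw : w ∈ G.verts) {a b : Finset ℕ}
    (ha : a ∈ T) (hva : v ∈ a) (hwa : w ∉ a) (hb : b ∈ T) (hwb : w ∈ b) (hvb : v ∉ b) :
    False := by
  letI : TopologicalSpace {x // x ∈ G.verts} := tubingTop G T
  have hC := (hconn v w hadj).2
  have hU : @IsOpen {x // x ∈ G.verts} (tubingTop G T) {x | (x : ℕ) ∈ a} :=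
    TopologicalSpace.GenerateOpen.basic _ ⟨a, ha, rfl⟩
  have hV : @IsOpen {x // x ∈ G.verts} (tubingTop G T) {x | (x : ℕ) ∈ b} :=
    TopologicalSpace.GenerateOpen.basic _ ⟨b, hb, rfl⟩
  have hcov : {x : {x // x ∈ G.verts} | (x : ℕ) = v ∨ (x : ℕ) = w} ⊆
      {x | (x : ℕ) ∈ a} ∪ {x | (x : ℕ) ∈ b} := by
    rintro x (h | h)
    · exact Or.inl (by rw [Set.mem_setOf_eq, h]; exact hva)
    · exact Or.inr (by rw [Set.mem_setOf_eq, h]; exact hwb)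
  obtain ⟨x, hxP, hxa, hxb⟩ := hC _ _ hU hV hcov
    ⟨⟨v, hv⟩, Or.inl rfl, hva⟩ ⟨⟨w, hw⟩, Or.inr rfl, hwb⟩
  rcases hxP with h | h
  · exact hvb (by rw [← h]; exact hxb)
  · exact hwa (by rw [← h]; exact hxa)

/-- Existence of the minimal tube containing a vertex, given the basis property. -/
lemma exists_minTube (hT : ∀ t ∈ T, IsTube G t)
    (hbasis : @TopologicalSpace.IsTopologicalBasis {x // x ∈ G.verts} (tubingTop G T)
      (tubeSets G T)) {v : ℕ} (hv : v ∈ G.verts) :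
    ∃ c ∈ T, v ∈ c ∧ ∀ t ∈ T, v ∈ t → c ⊆ t := by
  letI : TopologicalSpace {x // x ∈ G.verts} := tubingTop G T
  have hx : (⟨v, hv⟩ : {x // x ∈ G.verts}) ∈ ⋃₀ tubeSets G T := by
    rw [hbasis.sUnion_eq]; trivial
  obtain ⟨U, ⟨t0, ht0, rfl⟩, hxU⟩ := hx
  have hS : (T.filter (fun t => v ∈ t)).Nonempty :=
    ⟨t0, Finset.mem_filter.mpr ⟨ht0, hxU⟩⟩
  obtain ⟨c, hcS, hmin⟩ := Finset.exists_min_image _ Finset.card hS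
  obtain ⟨hcT, hvc⟩ := Finset.mem_filter.mp hcS
  refine ⟨c, hcT, hvc, ?_⟩
  intro t ht hvt
  obtain ⟨W, ⟨c', hc', rfl⟩, hxW, hWsub⟩ :=
    hbasis.exists_subset_inter _ ⟨c, hcT, rfl⟩ _ ⟨t, ht, rfl⟩ ⟨v, hv⟩ ⟨hvc, hvt⟩
  have hsub : ∀ y ∈ c', y ∈ c ∧ y ∈ t := by
    intro y hy
    have hyv : y ∈ G.verts := (hT c' hc').2.1 hy
    exact hWsub (show (⟨y, hyv⟩ : {x // x ∈ G.verts}) ∈ {x : {x // x ∈ G.verts} | (x : ℕ) ∈ c'} from hy)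
  have hc'c : c' ⊆ c := fun y hy => (hsub y hy).1
  have heq : c' = c := Finset.eq_of_subset_of_card_le hc'c
    (hmin c' (Finset.mem_filter.mpr ⟨hc', hxW⟩))
  intro y hy
  exact (hsub y (by rw [heq]; exact hy)).2

/-- Pairwise compatibility from the basis and connectivity conditions. -/
lemma compat_of_basis (hT : ∀ t ∈ T, IsTube G t)
    (hbasis : @TopologicalSpace.IsTopologicalBasis {x // x ∈ G.verts} (tubingTop G T)
      (tubeSets G T))
    (hconn : ∀ v w : ℕ, (G.Adj v w ∨ ∃ t ∈ T, (reconn G t).Adj v w) →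
      @IsConnected {x // x ∈ G.verts} (tubingTop G T)
        {x : {x // x ∈ G.verts} | (x : ℕ) = v ∨ (x : ℕ) = w}) :
    ∀ a ∈ T, ∀ b ∈ T, a ≠ b → Compatible G a b := by
  have key : ∀ n : ℕ, ∀ a ∈ T, ∀ b ∈ T, a.card + b.card ≤ n → a ≠ b →
      Compatible G a b := by
    intro n
    induction n using Nat.strong_induction_on with
    | _ n ih =>
    intro a ha b hb hcard hne
    by_cases hab : a ⊆ b
    · exact Or.inl hab
    by_cases hba : b ⊆ a
    · exact Or.inr (Or.inl hba)
    have haV : a ⊆ G.verts := (hT a ha).2.1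
    have hbV : b ⊆ G.verts := (hT b hb).2.1
    by_cases hdisj : Disjoint a b
    · refine Or.inr (Or.inr ⟨hdisj, ?_⟩)
      rintro ⟨v, hva, w, hwb, hvw⟩
      exact sep_lemma hconn (Or.inl hvw) (haV hva) (hbV hwb)
        ha hva (Finset.disjoint_right.mp hdisj hwb) hb hwb
        (Finset.disjoint_left.mp hdisj hva)
    exfalso
    obtain ⟨x, hxa, hxb⟩ := Finset.not_disjoint_iff.mp hdisj
    obtain ⟨v0, hv0a, hv0b⟩ := Finset.not_subset.mp hab
    obtain ⟨w0, hw0b, hw0a⟩ := Finset.not_subset.mp hba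
    -- crossing edge in `a` from `a ∩ b` out of `b`
    obtain ⟨q, p, hqb, hpb, hqa, hpa, hadjqp⟩ :=
      crossEdge ((hT a ha).2.2 x hxa v0 hv0a) hxb hv0b
    obtain ⟨cq, hcqT, hqcq, hcqmin⟩ := exists_minTube hT hbasis (haV hqa)
    -- maximal tube inside `a ∩ b` adjacent to a vertex of `a \ b`
    have hScq : cq ∈ T.filter (fun c => c ⊆ a ∧ c ⊆ b ∧
        ∃ p' u, p' ∈ a ∧ p' ∉ b ∧ u ∈ c ∧ G.Adj p' u) :=
      Finset.mem_filter.mpr ⟨hcqT, hcqmin a ha hqa, hcqmin b hb hqb,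
        p, q, hpa, hpb, hqcq, G.symm q p hadjqp⟩
    obtain ⟨c, hcS, hmax⟩ := Finset.exists_max_image _ Finset.card ⟨cq, hScq⟩
    obtain ⟨hcT, hca, hcb, p1, u1, hp1a, hp1b, hu1c, hadj1⟩ := Finset.mem_filter.mp hcS
    have hp1c : p1 ∉ c := fun h => hp1b (hcb h)
    -- crossing edge in `b` leaving `c`
    obtain ⟨r, s, hrc, hsc, hrb, hsb, hadjrs⟩ :=
      crossEdge ((hT b hb).2.2 u1 (hcb hu1c) w0 hw0b) hu1c (fun h => hw0a (hca h))
    have hsa : s ∈ a := by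
      by_contra hsa
      obtain ⟨cs', hcs'T, hscs', hcs'min⟩ := exists_minTube hT hbasis (hbV hsb)
      have hradj : (reconn G c).Adj p1 s := by
        refine ⟨fun h => hp1b (h ▸ hsb), ?_, ?_,
          Or.inr ⟨c, Finset.mem_singleton_self c, ⟨u1, hu1c, hadj1⟩,
            ⟨r, hrc, G.symm r s hadjrs⟩⟩⟩
        · rw [Finset.mem_sdiff]
          refine ⟨haV hp1a, ?_⟩
          rintro hmem
          obtain ⟨f, hf, hpf⟩ := Finset.mem_biUnion.mp hmem
          rw [Finset.mem_singleton] at hf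
          exact hp1c (hf ▸ hpf)
        · rw [Finset.mem_sdiff]
          refine ⟨hbV hsb, ?_⟩
          rintro hmem
          obtain ⟨f, hf, hsf⟩ := Finset.mem_biUnion.mp hmem
          rw [Finset.mem_singleton] at hf
          exact hsc (hf ▸ hsf)
      exact sep_lemma hconn (Or.inr ⟨c, hcT, hradj⟩) (haV hp1a) (hbV hsb)
        ha hp1a hsa hcs'T hscs' (fun h => hp1b (hcs'min b hb hsb h))
    obtain ⟨cs, hcsT, hscs, hcsmin⟩ := exists_minTube hT hbasis (hbV hsb)
    have hcsa : cs ⊆ a := hcsmin a ha hsa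
    have hcsb : cs ⊆ b := hcsmin b hb hsb
    have hrcs : r ∈ cs := by
      by_contra hr
      exact sep_lemma hconn (Or.inl hadjrs) (hbV hrb) (hbV hsb)
        hcT hrc hsc hcsT hscs hr
    have hclt : c.card < a.card := Finset.card_lt_card
      (Finset.ssubset_iff_subset_ne.mpr ⟨hca, fun h => hv0b (hcb (h.symm ▸ hv0a))⟩)
    have hcslt : cs.card < b.card := Finset.card_lt_card
      (Finset.ssubset_iff_subset_ne.mpr ⟨hcsb, fun h => hw0a (hcsa (h.symm ▸ hw0b))⟩)
    have hcomp := ih (c.card + cs.card) (by omega) c hcT cs hcsT le_rfl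
      (fun h => hsc (h.symm ▸ hscs))
    rcases hcomp with h | h | h
    · have hcsS : cs ∈ T.filter (fun c => c ⊆ a ∧ c ⊆ b ∧
          ∃ p' u, p' ∈ a ∧ p' ∉ b ∧ u ∈ c ∧ G.Adj p' u) :=
        Finset.mem_filter.mpr ⟨hcsT, hcsa, hcsb, p1, u1, hp1a, hp1b, h hu1c, hadj1⟩
      exact hsc ((Finset.eq_of_subset_of_card_le h (hmax cs hcsS)).symm ▸ hscs)
    · exact hsc (h hscs)
    · exact Finset.disjoint_left.mp h.1 hrc hrcs
  exact fun a ha b hb hne => key (a.card + b.card) a ha b hb le_rfl hne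

/-- The universal tube belongs to `T`. -/
lemma univ_mem_of_basis (hc : IsConnGraph G) (hT : ∀ t ∈ T, IsTube G t)
    (hbasis : @TopologicalSpace.IsTopologicalBasis {x // x ∈ G.verts} (tubingTop G T)
      (tubeSets G T))
    (hconn : ∀ v w : ℕ, (G.Adj v w ∨ ∃ t ∈ T, (reconn G t).Adj v w) →
      @IsConnected {x // x ∈ G.verts} (tubingTop G T)
        {x : {x // x ∈ G.verts} | (x : ℕ) = v ∨ (x : ℕ) = w})
    (hcompat : ∀ a ∈ T, ∀ b ∈ T, a ≠ b → Compatible G a b) : G.verts ∈ T := by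
  obtain ⟨v1, hv1⟩ := hc.1
  obtain ⟨t1, ht1, -, -⟩ := exists_minTube hT hbasis hv1
  obtain ⟨m, hmT, hmax⟩ := Finset.exists_max_image T Finset.card ⟨t1, ht1⟩
  have hmV : m ⊆ G.verts := (hT m hmT).2.1
  obtain ⟨x0, hx0⟩ := (hT m hmT).1
  have hall : ∀ w ∈ G.verts, w ∈ m := by
    intro w hw
    have hwalk := hc.2.2 x0 (hmV hx0) w hw
    clear hw
    induction hwalk with
    | refl => exact hx0
    | @tail y z h1 h2 hy =>
      obtain ⟨hyV, hzV, hadj⟩ := h2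
      by_cases hzm : z ∈ m
      · exact hzm
      exfalso
      obtain ⟨cz, hczT, hzcz, hczmin⟩ := exists_minTube hT hbasis hzV
      have hycz : y ∈ cz := by
        by_contra hy'
        exact sep_lemma hconn (Or.inl hadj) hyV hzV hmT hy hzm hczT hzcz hy'
      have hne : m ≠ cz := fun h => hzm (h.symm ▸ hzcz)
      rcases hcompat m hmT cz hczT hne with h | h | h
      · exact hzm ((Finset.eq_of_subset_of_card_le h (hmax cz hczT)).symm ▸ hzcz)
      · exact hzm (h hzcz)
      · exact Finset.disjoint_left.mp h.1 hy hycz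
  have hmeq : m = G.verts := Finset.Subset.antisymm hmV (fun w hw => hall w hw)
  exact hmeq ▸ hmT

end CDTub

open CDTub in
/-- Theorem (topological characterization of tubings): a collection `T` of tubes of a
finite connected simple graph `Γ` is a tubing iff `T` is a topological basis on the
vertex set such that any two vertices forming an edge of `Γ` or of a reconnected
complement `Γ_t^*` (for `t ∈ T`) are topologically connected as a two-point subspace
in the topology generated by `T`. -/
theorem tubing_iff_basis_connectivity (G : FinGraph) (hc : IsConnGraph G)
    (T : Finset (Finset ℕ)) (hT : ∀ t ∈ T, IsTube G t) :
    IsTubing G T ↔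
      (@TopologicalSpace.IsTopologicalBasis {x // x ∈ G.verts} (tubingTop G T)
          (tubeSets G T) ∧
        ∀ v w : ℕ, (G.Adj v w ∨ ∃ t ∈ T, (reconn G t).Adj v w) →
          @IsConnected {x // x ∈ G.verts} (tubingTop G T)
            {x : {x // x ∈ G.verts} | (x : ℕ) = v ∨ (x : ℕ) = w}) := by
  constructor
  · rintro ⟨hmem, hT', hcompat⟩
    have hbasis := basis_of_tubing hT' hmem hcompat
    refine ⟨hbasis, ?_⟩
    intro v w hadj
    have hv : v ∈ G.verts := by
      rcases hadj with h | ⟨t, ht, h⟩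
      · exact (G.support v w h).1
      · exact (Finset.mem_sdiff.mp h.2.1).1
    have hw : w ∈ G.verts := by
      rcases hadj with h | ⟨t, ht, h⟩
      · exact (G.support v w h).2
      · exact (Finset.mem_sdiff.mp h.2.2.1).1
    letI : TopologicalSpace {x // x ∈ G.verts} := tubingTop G T
    refine ⟨⟨⟨v, hv⟩, Or.inl rfl⟩, ?_⟩
    intro U V hU hV hcov hU' hV'
    by_contra hempty
    have hUV : ∀ x : {x // x ∈ G.verts}, ((x : ℕ) = v ∨ (x : ℕ) = w) →
        x ∈ U → x ∈ V → False :=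
      fun x h1 h2 h3 => hempty ⟨x, h1, h2, h3⟩
    have hget : ∀ (W : Set {x // x ∈ G.verts}), @IsOpen _ (tubingTop G T) W →
        ∀ {p q : ℕ} (hp : p ∈ G.verts),
        (⟨p, hp⟩ : {x // x ∈ G.verts}) ∈ W → ∀ (hq : q ∈ G.verts),
        (⟨q, hq⟩ : {x // x ∈ G.verts}) ∉ W →
        ∃ c ∈ T, p ∈ c ∧ q ∉ c := by
      intro W hW p q hp hpW hq hqW
      obtain ⟨B, ⟨cB, hcB, rfl⟩, hpB, hBsub⟩ :=
        @TopologicalSpace.IsTopologicalBasis.exists_subset_of_mem_open _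
          (tubingTop G T) _ hbasis _ _ hpW hW
      exact ⟨cB, hcB, hpB, fun hqc => hqW (hBsub hqc)⟩
    have hch : ∀ x : {x // x ∈ G.verts}, ((x : ℕ) = v ∨ (x : ℕ) = w) →
        x = ⟨v, hv⟩ ∨ x = ⟨w, hw⟩ := by
      rintro x (h | h)
      · exact Or.inl (Subtype.ext h)
      · exact Or.inr (Subtype.ext h)
    obtain ⟨x1, hx1P, hx1U⟩ := hU'
    obtain ⟨x2, hx2P, hx2V⟩ := hV'
    have hUmem : (⟨v, hv⟩ : {x // x ∈ G.verts}) ∈ U ∨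
        (⟨w, hw⟩ : {x // x ∈ G.verts}) ∈ U := by
      rcases hch x1 hx1P with rfl | rfl
      exacts [Or.inl hx1U, Or.inr hx1U]
    have hVmem : (⟨v, hv⟩ : {x // x ∈ G.verts}) ∈ V ∨
        (⟨w, hw⟩ : {x // x ∈ G.verts}) ∈ V := by
      rcases hch x2 hx2P with rfl | rfl
      exacts [Or.inl hx2V, Or.inr hx2V]
    rcases hUmem with h1 | h1 <;> rcases hVmem with h2 | h2
    · exact hUV ⟨v, hv⟩ (Or.inl rfl) h1 h2
    · -- v ∈ U, w ∈ V
      by_cases hvV : (⟨v, hv⟩ : {x // x ∈ G.verts}) ∈ V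
      · exact hUV ⟨v, hv⟩ (Or.inl rfl) h1 hvV
      by_cases hwU : (⟨w, hw⟩ : {x // x ∈ G.verts}) ∈ U
      · exact hUV ⟨w, hw⟩ (Or.inr rfl) hwU h2
      obtain ⟨a, haT, hva, hwa⟩ := hget U hU hv h1 hw hwU
      obtain ⟨b, hbT, hwb, hvb⟩ := hget V hV hw h2 hv hvV
      exact no_sep_of_tubing hcompat hadj haT hbT hva hwa hwb hvb
    · -- w ∈ U, v ∈ V
      by_cases hvU : (⟨v, hv⟩ : {x // x ∈ G.verts}) ∈ U
      · exact hUV ⟨v, hv⟩ (Or.inl rfl) hvU h2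
      by_cases hwV : (⟨w, hw⟩ : {x // x ∈ G.verts}) ∈ V
      · exact hUV ⟨w, hw⟩ (Or.inr rfl) h1 hwV
      obtain ⟨a, haT, hwa, hva⟩ := hget U hU hw h1 hv hvU
      obtain ⟨b, hbT, hvb, hwb⟩ := hget V hV hv h2 hw hwV
      exact no_sep_of_tubing hcompat hadj hbT haT hvb hwb hwa hva
    · exact hUV ⟨w, hw⟩ (Or.inr rfl) h1 h2
  · rintro ⟨hbasis, hconn⟩
    have hcompat := compat_of_basis hT hbasis hconn
    exact ⟨univ_mem_of_basis hc hT hbasis hconn hcompat, hT, hcompat⟩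
end
end

section
/- If T is a tubing on a finite connected simple graph Γ, then any pair of vertices connected by a path in the graph Γ (a sequence of edges) are also connected by a topological path (a continuous map from [0,1] to the vertex set) in the topology generated by T. Moreover, given the graphical path, there exists a topological path joining the two vertices whose range is precisely the set of vertices of the graphical path. -/
open scoped Classical
open TensorProduct

noncomputable section

section AuxPath

open CDTub

/-- Monotonicity along the specialization order: if every tube containing `w` contains `v`,
then every open set of the tubing topology containing `w` contains `v`. -/
lemma CDTub.open_mono (G : FinGraph) (T : Finset (Finset ℕ)) {v w : ℕ}
    (hv : v ∈ G.verts) (hw : w ∈ G.verts)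
    (h : ∀ t ∈ T, w ∈ t → v ∈ t) {U : Set {x // x ∈ G.verts}}
    (hU : TopologicalSpace.GenerateOpen (tubeSets G T) U)
    (hwU : (⟨w, hw⟩ : {x // x ∈ G.verts}) ∈ U) : (⟨v, hv⟩ : {x // x ∈ G.verts}) ∈ U := by
  induction hU with
  | basic U hU => obtain ⟨t, htT, rfl⟩ := hU; exact h t htT hwU
  | univ => trivial
  | inter U V _ _ ihU ihV => exact ⟨ihU hwU.1, ihV hwU.2⟩
  | sUnion S _ ih => obtain ⟨U, hUS, hwU⟩ := hwU; exact ⟨U, hUS, ih U hUS hwU⟩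

/-- For adjacent vertices, the tubes containing one of them are comparable with those
containing the other. -/
lemma CDTub.tube_dichotomy (G : FinGraph) (T : Finset (Finset ℕ)) (hT : IsTubing G T)
    {v w : ℕ} (hadj : G.Adj v w) :
    (∀ t ∈ T, w ∈ t → v ∈ t) ∨ (∀ t ∈ T, v ∈ t → w ∈ t) := by
  by_cases h : ∀ t ∈ T, w ∈ t → v ∈ t
  · exact Or.inl h
  push_neg at h
  obtain ⟨t0, ht0, hw0, hv0⟩ := h
  refine Or.inr fun s hs hvs => ?_
  have hne : s ≠ t0 := fun h => hv0 (h ▸ hvs)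
  rcases hT.2.2 s hs t0 ht0 hne with h1 | h1 | h1
  · exact absurd (h1 hvs) hv0
  · exact h1 hw0
  · exact absurd ⟨v, hvs, w, hw0, hadj⟩ h1.2

/-- A half-constant "jump" map is continuous when the target specializes appropriately. -/
lemma cont_jump {X : Type*} [TopologicalSpace X] (a b : X)
    (h : ∀ U : Set X, IsOpen U → b ∈ U → a ∈ U) :
    Continuous (fun t : unitInterval => if t = 1 then b else a) := by
  rw [continuous_def]
  intro U hU
  by_cases hb : b ∈ U
  · have ha := h U hU hb
    have : (fun t : unitInterval => if t = 1 then b else a) ⁻¹' U = Set.univ := by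
      ext t; simp only [Set.mem_preimage, Set.mem_univ, iff_true]
      split_ifs <;> assumption
    rw [this]; exact isOpen_univ
  · by_cases ha : a ∈ U
    · have : (fun t : unitInterval => if t = 1 then b else a) ⁻¹' U
          = {(1 : unitInterval)}ᶜ := by
        ext t
        simp only [Set.mem_preimage, Set.mem_compl_iff, Set.mem_singleton_iff]
        split_ifs with ht <;> simp [ht, ha, hb]
      rw [this]; exact isClosed_singleton.isOpen_compl
    · have : (fun t : unitInterval => if t = 1 then b else a) ⁻¹' U = ∅ := by
        ext t; simp only [Set.mem_preimage, Set.mem_empty_iff_false, iff_false]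
        split_ifs <;> assumption
      rw [this]; exact isOpen_empty

/-- The elementary step: adjacent vertices are joined by a path whose range is the pair. -/
lemma CDTub.step_path (G : FinGraph) (T : Finset (Finset ℕ)) (hT : IsTubing G T)
    {v w : ℕ} (hadj : G.Adj v w) (hv : v ∈ G.verts) (hw : w ∈ G.verts) :
    ∃ f : unitInterval → {x // x ∈ G.verts},
      @Continuous _ _ _ (tubingTop G T) f ∧ f 0 = ⟨v, hv⟩ ∧ f 1 = ⟨w, hw⟩ ∧
      Set.range f = {(⟨v, hv⟩ : {x // x ∈ G.verts}), ⟨w, hw⟩} := by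
  letI := tubingTop G T
  rcases tube_dichotomy G T hT hadj with h | h
  · -- every tube containing w contains v : jump at the end
    refine ⟨fun t => if t = 1 then ⟨w, hw⟩ else ⟨v, hv⟩, ?_, by norm_num, by simp, ?_⟩
    · exact cont_jump _ _ (fun U hU => open_mono G T hv hw h hU)
    · ext x
      constructor
      · rintro ⟨t, rfl⟩; dsimp only; split_ifs <;> simp
      · rintro (rfl | rfl)
        · exact ⟨0, by norm_num⟩
        · exact ⟨1, by simp⟩
  · -- every tube containing v contains w : jump at the start
    refine ⟨fun t => if t = 0 then ⟨v, hv⟩ else ⟨w, hw⟩, ?_, by simp, by norm_num, ?_⟩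
    · have : (fun t : unitInterval => if t = 0 then (⟨v, hv⟩ : {x // x ∈ G.verts})
          else ⟨w, hw⟩) = (fun t : unitInterval => if t = 1 then (⟨v, hv⟩ : {x // x ∈ G.verts})
          else ⟨w, hw⟩) ∘ unitInterval.symm := by
        funext t
        simp only [Function.comp_apply]
        congr 1
        simp [unitInterval.symm_eq_one]
      rw [this]
      exact (cont_jump _ _ (fun U hU => open_mono G T hw hv h hU)).comp
        unitInterval.continuous_symm
    · ext x
      constructor
      · rintro ⟨t, rfl⟩; dsimp only; split_ifs <;> simp
      · rintro (rfl | rfl)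
        · exact ⟨0, by simp⟩
        · exact ⟨1, by norm_num⟩

/-- Concatenation of step paths along a graphical walk. -/
lemma CDTub.list_path (G : FinGraph) (T : Finset (Finset ℕ)) (hT : IsTubing G T) :
    ∀ (l : List ℕ) (v v' : ℕ) (hv : v ∈ G.verts) (hv' : v' ∈ G.verts),
    l ≠ [] → l.Chain' G.Adj → l.head? = some v → l.getLast? = some v' →
    ∃ f : unitInterval → {x // x ∈ G.verts},
      @Continuous _ _ _ (tubingTop G T) f ∧ f 0 = ⟨v, hv⟩ ∧ f 1 = ⟨v', hv'⟩ ∧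
      Set.range f = {x : {x // x ∈ G.verts} | (x : ℕ) ∈ l} := by
  letI := tubingTop G T
  intro l
  induction l with
  | nil => intro v v' hv hv' hl; exact absurd rfl hl
  | cons a tail ih =>
    intro v v' hv hv' _ hchain hhead hlast
    have hva : v = a := by simpa using hhead.symm
    subst hva
    cases tail with
    | nil =>
      have hvv' : v = v' := by simpa using hlast
      subst hvv'
      refine ⟨fun _ => ⟨v, hv⟩, continuous_const, rfl, rfl, ?_⟩
      ext x
      simp [Subtype.ext_iff, eq_comm]
    | cons b rest =>
      simp only [List.Chain', List.isChain_cons_cons] at hchain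
      have hb : b ∈ G.verts := (G.support _ _ hchain.1).2
      have hlast' : (b :: rest).getLast? = some v' := by
        rw [← hlast, List.getLast?_cons_cons]
      obtain ⟨f2, hf2c, hf20, hf21, hf2r⟩ :=
        ih b v' hb hv' (by simp) hchain.2 rfl hlast'
      obtain ⟨f1, hf1c, hf10, hf11, hf1r⟩ := step_path G T hT hchain.1 hv hb
      let p1 : Path (⟨v, hv⟩ : {x // x ∈ G.verts}) ⟨b, hb⟩ := ⟨⟨f1, hf1c⟩, hf10, hf11⟩
      let p2 : Path (⟨b, hb⟩ : {x // x ∈ G.verts}) ⟨v', hv'⟩ := ⟨⟨f2, hf2c⟩, hf20, hf21⟩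
      refine ⟨p1.trans p2, (p1.trans p2).continuous, (p1.trans p2).source,
        (p1.trans p2).target, ?_⟩
      have : Set.range ⇑(p1.trans p2) = Set.range f1 ∪ Set.range f2 :=
        Path.trans_range p1 p2
      rw [this, hf1r, hf2r]
      ext x
      simp only [Set.mem_union, Set.mem_insert_iff, Set.mem_singleton_iff,
        Set.mem_setOf_eq, List.mem_cons, Subtype.ext_iff]
      tauto

end AuxPath

open CDTub in
/-- If `T` is a tubing on a connected graph `Γ`, any two vertices joined by a graphical
path are joined by a topological path in the topology generated by `T`; moreover there
is a topological path whose range is precisely the set of vertices of the graphical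
path. -/
theorem graphical_path_gives_topological_path (G : FinGraph) (hc : IsConnGraph G)
    (T : Finset (Finset ℕ)) (hT : IsTubing G T)
    (l : List ℕ) (hl : l ≠ []) (hchain : l.Chain' G.Adj)
    (v v' : ℕ) (hv : v ∈ G.verts) (hv' : v' ∈ G.verts)
    (hhead : l.head? = some v) (hlast : l.getLast? = some v') :
    (∃ f : unitInterval → {x // x ∈ G.verts},
      @Continuous _ _ _ (tubingTop G T) f ∧ f 0 = ⟨v, hv⟩ ∧ f 1 = ⟨v', hv'⟩) ∧
    (∃ f : unitInterval → {x // x ∈ G.verts},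
      @Continuous _ _ _ (tubingTop G T) f ∧ f 0 = ⟨v, hv⟩ ∧ f 1 = ⟨v', hv'⟩ ∧
      Set.range f = {x : {x // x ∈ G.verts} | (x : ℕ) ∈ l}) := by
  obtain ⟨f, hc, h0, h1, hr⟩ :=
    CDTub.list_path G T hT l v v' hv hv' hl hchain hhead hlast
  exact ⟨⟨f, hc, h0, h1⟩, ⟨f, hc, h0, h1, hr⟩⟩
end
end

section
/- Let Γ be a finite simple graph and let t and t' be disjoint tubes of Γ (so t' is a tube of the reconnected complement Γ_t^* and t is a tube of Γ_{t'}^*). Then the iterated reconnected complements coincide: (Γ_t^*)_{t'}^* = (Γ_{t'}^*)_t^*; both have vertex set the vertices of Γ not in t ∪ t', and they have exactly the same edges. -/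
open scoped Classical
open TensorProduct

noncomputable section

open CDTub

set_option maxHeartbeats 1000000 in
lemma reconn2_adj (G : FinGraph) (t t' : Finset ℕ) (hsub : t' ⊆ G.verts)
    (hd : Disjoint t t') (v w : ℕ) :
    (reconn (reconn G t) t').Adj v w ↔
    (v ≠ w ∧ (v ∈ G.verts ∧ v ∉ t ∧ v ∉ t') ∧ (w ∈ G.verts ∧ w ∉ t ∧ w ∉ t') ∧
      (G.Adj v w ∨
        ((∃ u ∈ t, G.Adj v u) ∧ (∃ u ∈ t, G.Adj w u)) ∨
        ((∃ u ∈ t', G.Adj v u) ∧ (∃ u ∈ t', G.Adj w u)) ∨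
        ((∃ a ∈ t, ∃ b ∈ t', G.Adj a b) ∧
          (((∃ u ∈ t, G.Adj v u) ∧ (∃ u ∈ t', G.Adj w u)) ∨
           ((∃ u ∈ t', G.Adj v u) ∧ (∃ u ∈ t, G.Adj w u)))))) := by
  have hnt : ∀ u ∈ t', u ∉ t := fun u hu => Finset.disjoint_right.mp hd hu
  simp only [reconn, reconnAll, Finset.mem_singleton, Finset.singleton_biUnion,
    Finset.mem_sdiff, exists_eq_left, id]
  constructor
  · rintro ⟨hvw, ⟨⟨hvG, hvt⟩, hvt'⟩, ⟨⟨hwG, hwt⟩, hwt'⟩, h⟩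
    refine ⟨hvw, ⟨hvG, hvt, hvt'⟩, ⟨hwG, hwt, hwt'⟩, ?_⟩
    rcases h with ⟨_, _, _, h⟩ | ⟨⟨u, hu, _, _, _, hvu⟩, ⟨u', hu', _, _, _, hwu'⟩⟩
    · rcases h with h | h
      exacts [Or.inl h, Or.inr (Or.inl h)]
    · rcases hvu with hvu | ⟨hAv, x, hx, hux⟩ <;>
        rcases hwu' with hwu' | ⟨hAw, y, hy, huy⟩
      · exact Or.inr (Or.inr (Or.inl ⟨⟨u, hu, hvu⟩, ⟨u', hu', hwu'⟩⟩))
      · exact Or.inr (Or.inr (Or.inr ⟨⟨y, hy, u', hu', G.symm _ _ huy⟩,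
          Or.inr ⟨⟨u, hu, hvu⟩, hAw⟩⟩))
      · exact Or.inr (Or.inr (Or.inr ⟨⟨x, hx, u, hu, G.symm _ _ hux⟩,
          Or.inl ⟨hAv, ⟨u', hu', hwu'⟩⟩⟩))
      · exact Or.inr (Or.inl ⟨hAv, hAw⟩)
  · rintro ⟨hvw, ⟨hvG, hvt, hvt'⟩, ⟨hwG, hwt, hwt'⟩, h⟩
    refine ⟨hvw, ⟨⟨hvG, hvt⟩, hvt'⟩, ⟨⟨hwG, hwt⟩, hwt'⟩, ?_⟩
    have mem : ∀ u ∈ t', u ∈ G.verts ∧ u ∉ t := fun u hu => ⟨hsub hu, hnt u hu⟩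
    rcases h with h | ⟨hAv, hAw⟩ | ⟨⟨u, hu, hvu⟩, ⟨u', hu', hwu'⟩⟩ |
        ⟨⟨a, ha, b, hb, hab⟩, ⟨hAv, u', hu', hwu'⟩ | ⟨⟨u, hu, hvu⟩, hAw⟩⟩
    · exact Or.inl ⟨hvw, ⟨hvG, hvt⟩, ⟨hwG, hwt⟩, Or.inl h⟩
    · exact Or.inl ⟨hvw, ⟨hvG, hvt⟩, ⟨hwG, hwt⟩, Or.inr ⟨hAv, hAw⟩⟩
    · exact Or.inr ⟨⟨u, hu, fun h => hvt' (h ▸ hu), ⟨hvG, hvt⟩, mem u hu, Or.inl hvu⟩,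
        ⟨u', hu', fun h => hwt' (h ▸ hu'), ⟨hwG, hwt⟩, mem u' hu', Or.inl hwu'⟩⟩
    · exact Or.inr ⟨⟨b, hb, fun h => hvt' (h ▸ hb), ⟨hvG, hvt⟩, mem b hb,
        Or.inr ⟨hAv, a, ha, G.symm _ _ hab⟩⟩,
        ⟨u', hu', fun h => hwt' (h ▸ hu'), ⟨hwG, hwt⟩, mem u' hu', Or.inl hwu'⟩⟩
    · exact Or.inr ⟨⟨u, hu, fun h => hvt' (h ▸ hu), ⟨hvG, hvt⟩, mem u hu, Or.inl hvu⟩,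
        ⟨b, hb, fun h => hwt' (h ▸ hb), ⟨hwG, hwt⟩, mem b hb,
          Or.inr ⟨hAw, a, ha, G.symm _ _ hab⟩⟩⟩

open CDTub in
set_option maxHeartbeats 4000000 in
/-- For disjoint tubes `t`, `t'` of `Γ`, the iterated reconnected complements coincide:
`(Γ_t^*)_{t'}^* = (Γ_{t'}^*)_t^*`, with common vertex set `Nod(Γ) ∖ (t ∪ t')` and the
same edges. -/
theorem reconn_comm (G : FinGraph) (t t' : Finset ℕ)
    (ht : IsTube G t) (ht' : IsTube G t') (hdisj : Disjoint t t') :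
    (reconn (reconn G t) t').verts = (reconn (reconn G t') t).verts ∧
    (reconn (reconn G t) t').verts = G.verts \ (t ∪ t') ∧
    ∀ v w, (reconn (reconn G t) t').Adj v w ↔ (reconn (reconn G t') t).Adj v w := by
  have hv1 : (reconn (reconn G t) t').verts = G.verts \ (t ∪ t') := by
    simp only [reconn, reconnAll, Finset.singleton_biUnion, id]
    ext x; simp [Finset.mem_sdiff]; tauto
  have hv2 : (reconn (reconn G t') t).verts = G.verts \ (t' ∪ t) := by
    simp only [reconn, reconnAll, Finset.singleton_biUnion, id]
    ext x; simp [Finset.mem_sdiff]; tauto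
  refine ⟨by rw [hv1, hv2, Finset.union_comm], hv1, fun v w => ?_⟩
  rw [reconn2_adj G t t' ht'.2.1 hdisj, reconn2_adj G t' t ht.2.1 hdisj.symm]
  have hL : (∃ a ∈ t, ∃ b ∈ t', G.Adj a b) ↔ (∃ a ∈ t', ∃ b ∈ t, G.Adj a b) := by
    constructor <;> rintro ⟨a, ha, b, hb, h⟩ <;> exact ⟨b, hb, a, ha, G.symm _ _ h⟩
  rw [hL]
  constructor <;> rintro ⟨h1, ⟨a1, a2, a3⟩, ⟨b1, b2, b3⟩, h⟩ <;>
    refine ⟨h1, ⟨a1, a3, a2⟩, ⟨b1, b3, b2⟩, ?_⟩ <;>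
    rcases h with h | h | h | ⟨hl, h⟩ <;>
    first
      | exact Or.inl h
      | exact Or.inr (Or.inr (Or.inl h))
      | exact Or.inr (Or.inl h)
      | exact Or.inr (Or.inr (Or.inr ⟨hl, h.symm⟩))
end
end

section
/- Let T be a tubing of a finite connected simple graph Γ, let t ∈ T, and let S be a tubing of the induced subgraph Γ_t that is compatible with the restriction T|_t (i.e., the union of S and T|_t is a tubing of Γ_t). Then T ∘_t S, defined as the family of all tubes belonging to T together with all tubes of S (viewed as tubes of Γ), is a tubing of Γ. -/
open scoped Classical
open TensorProduct

noncomputable section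

namespace CDTub

lemma farApart_symm {G : FinGraph} {a b : Finset ℕ} (h : FarApart G a b) :
    FarApart G b a := by
  refine ⟨h.1.symm, ?_⟩
  rintro ⟨v, hv, w, hw, hadj⟩
  exact h.2 ⟨w, hw, v, hv, G.symm _ _ hadj⟩

lemma compatible_symm {G : FinGraph} {a b : Finset ℕ} (h : Compatible G a b) :
    Compatible G b a := by
  rcases h with h | h | h
  · exact Or.inr (Or.inl h)
  · exact Or.inl h
  · exact Or.inr (Or.inr (farApart_symm h))

lemma tube_lift {G : FinGraph} {t s : Finset ℕ} (ht : t ⊆ G.verts)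
    (h : IsTube (induce G t) s) : IsTube G s := by
  refine ⟨h.1, h.2.1.trans ht, fun v hv w hw => ?_⟩
  exact Relation.ReflTransGen.mono (r := fun a b => a ∈ s ∧ b ∈ s ∧ (induce G t).Adj a b)
    (p := fun a b => a ∈ s ∧ b ∈ s ∧ G.Adj a b)
    (fun a b hab => ⟨hab.1, hab.2.1, hab.2.2.2.2⟩) v w (h.2.2 v hv w hw)

lemma compatible_lift {G : FinGraph} {t a b : Finset ℕ} (ha : a ⊆ t) (hb : b ⊆ t)
    (h : Compatible (induce G t) a b) : Compatible G a b := by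
  rcases h with h | h | h
  · exact Or.inl h
  · exact Or.inr (Or.inl h)
  · refine Or.inr (Or.inr ⟨h.1, ?_⟩)
    rintro ⟨v, hv, w, hw, hadj⟩
    exact h.2 ⟨v, hv, w, hw, ha hv, hb hw, hadj⟩

lemma farApart_subset {G : FinGraph} {a b b' : Finset ℕ} (hb : b' ⊆ b)
    (h : FarApart G a b) : FarApart G a b' := by
  refine ⟨h.1.mono_right hb, ?_⟩
  rintro ⟨v, hv, w, hw, hadj⟩
  exact h.2 ⟨v, hv, w, hb hw, hadj⟩

end CDTub

open CDTub in
/-- If `S` is a tubing of `Γ_t` compatible with `T|_t`, then `T ∘_t S = T ∪ S` is a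
tubing of `Γ`. -/
theorem circ_is_tubing (G : FinGraph) (hc : IsConnGraph G)
    (T : Finset (Finset ℕ)) (hT : IsTubing G T) (t : Finset ℕ) (ht : t ∈ T)
    (S : Finset (Finset ℕ)) (hS : IsTubing (induce G t) S)
    (hcomp : IsTubing (induce G t) (restrictT T t ∪ S)) :
    IsTubing G (T ∪ S) := by
  obtain ⟨hTv, hTtube, hTcomp⟩ := hT
  have htt : IsTube G t := hTtube t ht
  have htsub : t ⊆ G.verts := htt.2.1
  -- key: compatibility between an element of T and an element of S
  have key : ∀ u ∈ T, ∀ s ∈ S, u ≠ s → Compatible G u s := by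
    intro u hu s hs hne
    have hsS : IsTube (induce G t) s := hS.2.1 s hs
    have hst : s ⊆ t := hsS.2.1
    by_cases hut : u ⊆ t
    · -- both inside t: use hcomp
      have hu' : u ∈ restrictT T t ∪ S :=
        Finset.mem_union_left _ (Finset.mem_filter.mpr ⟨hu, hut⟩)
      have hs' : s ∈ restrictT T t ∪ S := Finset.mem_union_right _ hs
      exact compatible_lift hut hst (hcomp.2.2 u hu' s hs' hne)
    · -- u is not contained in t
      by_cases hueq : u = t
      · exact hueq ▸ Or.inr (Or.inl hst)
      · rcases hTcomp u hu t ht hueq with h | h | h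
        · exact absurd h hut
        · exact Or.inr (Or.inl (hst.trans h))
        · exact Or.inr (Or.inr (farApart_subset hst h))
  refine ⟨Finset.mem_union_left _ hTv, ?_, ?_⟩
  · intro s hs
    rcases Finset.mem_union.mp hs with h | h
    · exact hTtube s h
    · exact tube_lift htsub (hS.2.1 s h)
  · intro a haM b hbM hne
    rcases Finset.mem_union.mp haM with ha | ha <;>
      rcases Finset.mem_union.mp hbM with hb | hb
    · exact hTcomp a ha b hb hne
    · exact key a ha b hb hne
    · exact compatible_symm (key b hb a ha hne.symm)
    · exact compatible_lift (hS.2.1 a ha).2.1 (hS.2.1 b hb).2.1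
        (hS.2.2 a ha b hb hne)
end
end

section
/- Let T be a tubing of a finite connected simple graph Γ, let t ∈ T, and let S be a tubing of the reconnected complement Γ_t^* that is compatible with the induced tubing T_t^*. Then T ◇ S is a tubing of Γ, where T ◇ S consists of all sets s of vertices of Γ satisfying one of: (a) s ∈ T; (b) s ∈ S and, viewed in Γ, s is not linked to t; (c) s = s' ∪ t for some s' ∈ S that is linked to t in Γ (i.e., some vertex of s' is adjacent in Γ to some vertex of t). -/
open scoped Classical
open TensorProduct

noncomputable section

section Aux
open CDTub

lemma reconn_verts (G : FinGraph) (t : Finset ℕ) :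
    (reconn G t).verts = G.verts \ t := by
  simp [reconn, reconnAll]

lemma reconn_adj {G : FinGraph} {t : Finset ℕ} {v w : ℕ} :
    (reconn G t).Adj v w ↔ v ≠ w ∧ v ∈ G.verts \ t ∧ w ∈ G.verts \ t ∧
      (G.Adj v w ∨ (∃ u ∈ t, G.Adj v u) ∧ ∃ u' ∈ t, G.Adj w u') := by
  simp only [reconn, reconnAll, Finset.singleton_biUnion, id, Finset.mem_singleton,
    exists_eq_left]

lemma far_symm (G : FinGraph) {p q : Finset ℕ} (h : FarApart G p q) : FarApart G q p := by
  obtain ⟨hd, hne⟩ := h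
  refine ⟨hd.symm, ?_⟩
  rintro ⟨v, hv, w, hw, hadj⟩
  exact hne ⟨w, hw, v, hv, G.symm _ _ hadj⟩

lemma far_union (G : FinGraph) {p q r : Finset ℕ} (h1 : FarApart G p r)
    (h2 : FarApart G q r) : FarApart G (p ∪ q) r := by
  obtain ⟨hd1, hn1⟩ := h1
  obtain ⟨hd2, hn2⟩ := h2
  refine ⟨Finset.disjoint_union_left.mpr ⟨hd1, hd2⟩, ?_⟩
  rintro ⟨v, hv, w, hw, hadj⟩
  rcases Finset.mem_union.mp hv with h' | h'
  · exact hn1 ⟨v, h', w, hw, hadj⟩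
  · exact hn2 ⟨v, h', w, hw, hadj⟩

lemma far_of_reconn (G : FinGraph) (t : Finset ℕ) {a b : Finset ℕ}
    (ha : a ⊆ G.verts \ t) (hb : b ⊆ G.verts \ t)
    (h : FarApart (reconn G t) a b) : FarApart G a b := by
  obtain ⟨hd, hne⟩ := h
  refine ⟨hd, ?_⟩
  rintro ⟨v, hv, w, hw, hadj⟩
  have hvw : v ≠ w := fun hvw => Finset.disjoint_left.mp hd hv (hvw ▸ hw)
  exact hne ⟨v, hv, w, hw, reconn_adj.mpr ⟨hvw, ha hv, hb hw, Or.inl hadj⟩⟩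

end Aux

open CDTub in
/-- If `S` is a tubing of the reconnected complement `Γ_t^*` compatible with the induced
tubing `T_t^*`, then `T ◇ S` is a tubing of `Γ`. -/
theorem diamond_is_tubing (G : FinGraph) (hc : IsConnGraph G)
    (T : Finset (Finset ℕ)) (hT : IsTubing G T) (t : Finset ℕ) (ht : t ∈ T)
    (S : Finset (Finset ℕ)) (hS : IsTubing (reconn G t) S)
    (hcomp : IsTubing (reconn G t) (indStar T t ∪ S)) :
    IsTubing G (diamond G T t S) := by
  obtain ⟨hTu, hTtube, hTcomp⟩ := hT
  obtain ⟨hSu, hStube, hScomp⟩ := hS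
  obtain ⟨-, hCtube, hCcomp⟩ := hcomp
  have ht_tube : IsTube G t := hTtube t ht
  have htne : t.Nonempty := ht_tube.1
  have htsub : t ⊆ G.verts := ht_tube.2.1
  have hsub : ∀ s ∈ S, s ⊆ G.verts \ t := by
    intro s hs
    have h := (hStube s hs).2.1
    rwa [reconn_verts] at h
  have hdisj : ∀ s ∈ S, Disjoint s t := fun s hs =>
    Finset.disjoint_left.mpr fun v hv => (Finset.mem_sdiff.mp (hsub s hs hv)).2
  -- a tube of Γ* not linked to t is a tube of Γ
  have tube_unlinked : ∀ s ∈ S, ¬ Linked G s t → IsTube G s := by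
    intro s hs hnl
    have hst := hStube s hs
    have hnoedge : ¬ ∃ v ∈ s, ∃ w ∈ t, G.Adj v w := fun h => hnl ⟨hdisj s hs, h⟩
    refine ⟨hst.1, fun v hv => (Finset.mem_sdiff.mp (hsub s hs hv)).1, ?_⟩
    intro v hv w hw
    refine Relation.ReflTransGen.mono ?_ _ _ (hst.2.2 v hv w hw)
    rintro a b ⟨ha, hb, hadj⟩
    refine ⟨ha, hb, ?_⟩
    rcases (reconn_adj.mp hadj).2.2.2 with h | ⟨⟨u, hu, hau⟩, -⟩
    · exact h
    · exact absurd ⟨a, ha, u, hu, hau⟩ hnoedge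
  -- a tube of T properly containing t has a vertex outside t adjacent to t
  have crossing : ∀ a ∈ T, t ⊆ a → a ≠ t → ∃ v ∈ a \ t, ∃ u ∈ t, G.Adj v u := by
    intro a haT hta hane
    obtain ⟨w, hwa, hwt⟩ : ∃ w ∈ a, w ∉ t := by
      by_contra h
      push_neg at h
      exact hane (Finset.Subset.antisymm h hta)
    obtain ⟨u0, hu0⟩ := htne
    have key : ∀ x, Relation.ReflTransGen (fun p q => p ∈ a ∧ q ∈ a ∧ G.Adj p q) u0 x →
        x ∉ t → ∃ v ∈ a \ t, ∃ u ∈ t, G.Adj v u := by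
      intro x hx
      induction hx with
      | refl => exact fun h => absurd hu0 h
      | @tail b c _ step ih =>
        intro hc
        by_cases hb : b ∈ t
        · exact ⟨c, Finset.mem_sdiff.mpr ⟨step.2.1, hc⟩, b, hb, G.symm _ _ step.2.2⟩
        · exact ih hb
    exact key w ((hTtube a haT).2.2 u0 (hta hu0) w hwa) hwt
  -- linked tube of Γ* joins with t to a tube of Γ
  have tube_union : ∀ s ∈ S, Linked G s t → IsTube G (s ∪ t) := by
    intro s hs hl
    obtain ⟨-, w0, hw0, u0, hu0, hadj0⟩ := hl
    set R := fun p q => p ∈ s ∪ t ∧ q ∈ s ∪ t ∧ G.Adj p q with hR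
    have hRsymm : ∀ {p q}, R p q → R q p := fun h => ⟨h.2.1, h.1, G.symm _ _ h.2.2⟩
    have rtg_symm : ∀ {p q}, Relation.ReflTransGen R p q → Relation.ReflTransGen R q p := by
      intro p q h
      induction h with
      | refl => exact .refl
      | tail _ step ih => exact Relation.ReflTransGen.trans (.single (hRsymm step)) ih
    have ht_walk : ∀ u ∈ t, ∀ u' ∈ t, Relation.ReflTransGen R u u' := by
      intro u hu u' hu'
      refine Relation.ReflTransGen.mono ?_ _ _ (ht_tube.2.2 u hu u' hu')
      rintro a b ⟨ha, hb, hab⟩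
      exact ⟨Finset.mem_union_right _ ha, Finset.mem_union_right _ hb, hab⟩
    have hs_walk : ∀ v ∈ s, ∀ w ∈ s, Relation.ReflTransGen R v w := by
      intro v hv w hw
      have step_to : ∀ a b, (a ∈ s ∧ b ∈ s ∧ (reconn G t).Adj a b) →
          Relation.ReflTransGen R a b := by
        rintro a b ⟨ha, hb, hab⟩
        rcases (reconn_adj.mp hab).2.2.2 with h | ⟨⟨u, hu, hau⟩, ⟨u', hu', hbu'⟩⟩
        · exact .single ⟨Finset.mem_union_left _ ha, Finset.mem_union_left _ hb, h⟩
        · refine Relation.ReflTransGen.trans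
            (.single ⟨Finset.mem_union_left _ ha, Finset.mem_union_right _ hu, hau⟩) ?_
          refine Relation.ReflTransGen.trans (ht_walk u hu u' hu') (.single ?_)
          exact ⟨Finset.mem_union_right _ hu', Finset.mem_union_left _ hb, G.symm _ _ hbu'⟩
      have h1 := Relation.ReflTransGen.mono step_to _ _ ((hStube s hs).2.2 v hv w hw)
      rwa [Relation.reflTransGen_idem] at h1
    have to_u0 : ∀ x ∈ s ∪ t, Relation.ReflTransGen R x u0 := by
      intro x hx
      rcases Finset.mem_union.mp hx with h | h
      · exact Relation.ReflTransGen.trans (hs_walk x h w0 hw0)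
          (.single ⟨Finset.mem_union_left _ hw0, Finset.mem_union_right _ hu0, hadj0⟩)
      · exact ht_walk x h u0 hu0
    refine ⟨⟨w0, Finset.mem_union_left _ hw0⟩, ?_, ?_⟩
    · intro v hv
      rcases Finset.mem_union.mp hv with h | h
      · exact (Finset.mem_sdiff.mp (hsub s hs h)).1
      · exact htsub h
    · intro v hv w hw
      exact Relation.ReflTransGen.trans (to_u0 v hv) (rtg_symm (to_u0 w hw))
  have linked_diff : ∀ a ∈ T, t ⊆ a → a ≠ t → ∃ v ∈ a \ t, ∃ u ∈ t, G.Adj v u :=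
    crossing
  -- two sets linked to t cannot be far apart in Γ*
  have not_far_both : ∀ p q : Finset ℕ, p ⊆ G.verts \ t → q ⊆ G.verts \ t →
      (∃ v ∈ p, ∃ u ∈ t, G.Adj v u) → (∃ w ∈ q, ∃ u ∈ t, G.Adj w u) →
      ¬ FarApart (reconn G t) p q := by
    rintro p q hp hq ⟨v, hv, u, hu, hvu⟩ ⟨w, hw, u', hu', hwu'⟩ ⟨hd, hne⟩
    have hvw : v ≠ w := fun h => Finset.disjoint_left.mp hd hv (h ▸ hw)
    exact hne ⟨v, hv, w, hw, reconn_adj.mpr ⟨hvw, hp hv, hq hw,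
      Or.inr ⟨⟨u, hu, hvu⟩, ⟨u', hu', hwu'⟩⟩⟩⟩
  have mem_ind_disj : ∀ a ∈ T, Disjoint a t → a ∈ indStar T t ∪ S := fun a haT hd =>
    Finset.mem_union_left _ (Finset.mem_union_left _ (Finset.mem_filter.mpr ⟨haT, hd⟩))
  have mem_ind_diff : ∀ a ∈ T, t ⊂ a → a \ t ∈ indStar T t ∪ S := fun a haT hss =>
    Finset.mem_union_left _ (Finset.mem_union_right _
      (Finset.mem_image.mpr ⟨a, Finset.mem_filter.mpr ⟨haT, hss⟩, rfl⟩))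
  have mem_S_union : ∀ s ∈ S, s ∈ indStar T t ∪ S := fun s hs => Finset.mem_union_right _ hs
  have far_ts : ∀ s ∈ S, ¬ Linked G s t → FarApart G t s := by
    intro s hs hnl
    have hnoedge : ¬ ∃ v ∈ s, ∃ w ∈ t, G.Adj v w := fun h => hnl ⟨hdisj s hs, h⟩
    refine ⟨(hdisj s hs).symm, ?_⟩
    rintro ⟨v, hv, w, hw, h⟩
    exact hnoedge ⟨w, hw, v, hv, G.symm _ _ h⟩
  have hTsub : ∀ a ∈ T, a ⊆ G.verts := fun a haT => (hTtube a haT).2.1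
  have hdiffsub : ∀ a ∈ T, a \ t ⊆ G.verts \ t := fun a haT =>
    Finset.sdiff_subset_sdiff (hTsub a haT) (Finset.Subset.refl t)
  -- case: a ∈ T vs s ∈ S unlinked
  have key1 : ∀ a ∈ T, ∀ s ∈ S, ¬ Linked G s t → Compatible G a s := by
    intro a haT s hsS hnl
    have hnoedge : ¬ ∃ v ∈ s, ∃ w ∈ t, G.Adj v w := fun h => hnl ⟨hdisj s hsS, h⟩
    by_cases hat : a = t
    · exact Or.inr (Or.inr (hat ▸ far_ts s hsS hnl))
    rcases hTcomp a haT t ht hat with h | h | h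
    · -- a ⊆ t
      refine Or.inr (Or.inr ⟨?_, ?_⟩)
      · exact Finset.disjoint_left.mpr fun v hv hvs =>
          (Finset.mem_sdiff.mp (hsub s hsS hvs)).2 (h hv)
      · rintro ⟨v, hv, w, hw, hadj⟩
        exact hnoedge ⟨w, hw, v, h hv, G.symm _ _ hadj⟩
    · -- t ⊊ a
      have hss : t ⊂ a := ⟨h, fun h' => hat (Finset.Subset.antisymm h' h)⟩
      by_cases heq : a \ t = s
      · exact Or.inr (Or.inl (heq ▸ Finset.sdiff_subset))
      rcases hCcomp _ (mem_ind_diff a haT hss) _ (mem_S_union s hsS) heq with h1 | h1 | h1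
      · -- a \ t ⊆ s : impossible since a \ t is linked to t but s is not
        obtain ⟨v, hv, u, hu, hadj⟩ := linked_diff a haT h hat
        exact absurd ⟨v, h1 hv, u, hu, hadj⟩ hnoedge
      · exact Or.inr (Or.inl (h1.trans Finset.sdiff_subset))
      · -- far apart in Γ*
        have h2 : FarApart G (a \ t) s :=
          far_of_reconn G t (hdiffsub a haT) (hsub s hsS) h1
        have h3 : FarApart G (a \ t ∪ t) s := far_union G h2 (far_ts s hsS hnl)
        rw [Finset.sdiff_union_of_subset h] at h3
        exact Or.inr (Or.inr h3)
    · -- a far apart from t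
      by_cases heq : a = s
      · exact Or.inl (heq ▸ Finset.Subset.refl s)
      have hasub : a ⊆ G.verts \ t := fun v hv => Finset.mem_sdiff.mpr
        ⟨hTsub a haT hv, fun h' => Finset.disjoint_left.mp h.1 hv h'⟩
      rcases hCcomp _ (mem_ind_disj a haT h.1) _ (mem_S_union s hsS) heq with h1 | h1 | h1
      · exact Or.inl h1
      · exact Or.inr (Or.inl h1)
      · exact Or.inr (Or.inr (far_of_reconn G t hasub (hsub s hsS) h1))
  -- case: a ∈ T vs s ∪ t, s ∈ S linked
  have key2 : ∀ a ∈ T, ∀ s ∈ S, Linked G s t → Compatible G a (s ∪ t) := by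
    intro a haT s hsS hl
    obtain ⟨-, w1, hw1, u1, hu1, hadj1⟩ := hl
    have hlinks : ∃ w ∈ s, ∃ u ∈ t, G.Adj w u := ⟨w1, hw1, u1, hu1, hadj1⟩
    by_cases hat : a = t
    · exact Or.inl (hat ▸ Finset.subset_union_right)
    rcases hTcomp a haT t ht hat with h | h | h
    · exact Or.inl (h.trans Finset.subset_union_right)
    · -- t ⊊ a
      have hss : t ⊂ a := ⟨h, fun h' => hat (Finset.Subset.antisymm h' h)⟩
      by_cases heq : a \ t = s
      · refine Or.inr (Or.inl ?_)
        rw [← heq, Finset.sdiff_union_of_subset h]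
      rcases hCcomp _ (mem_ind_diff a haT hss) _ (mem_S_union s hsS) heq with h1 | h1 | h1
      · refine Or.inl ?_
        have : a \ t ∪ t ⊆ s ∪ t := Finset.union_subset_union h1 (Finset.Subset.refl t)
        rwa [Finset.sdiff_union_of_subset h] at this
      · refine Or.inr (Or.inl ?_)
        refine Finset.union_subset (h1.trans Finset.sdiff_subset) h
      · exact absurd h1 (not_far_both _ _ (hdiffsub a haT) (hsub s hsS)
          (linked_diff a haT h hat) hlinks)
    · -- a far apart from t
      by_cases heq : a = s
      · exact Or.inl (heq ▸ Finset.subset_union_left)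
      have hasub : a ⊆ G.verts \ t := fun v hv => Finset.mem_sdiff.mpr
        ⟨hTsub a haT hv, fun h' => Finset.disjoint_left.mp h.1 hv h'⟩
      rcases hCcomp _ (mem_ind_disj a haT h.1) _ (mem_S_union s hsS) heq with h1 | h1 | h1
      · exact Or.inl (h1.trans Finset.subset_union_left)
      · -- s ⊆ a : impossible, a would carry an edge to t
        exact absurd ⟨w1, h1 hw1, u1, hu1, hadj1⟩ h.2
      · exact Or.inr (Or.inr (far_symm G (far_union G
          (far_symm G (far_of_reconn G t hasub (hsub s hsS) h1)) (far_symm G h))))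
  -- case: both in S unlinked
  have key3 : ∀ s ∈ S, ∀ s' ∈ S, s ≠ s' → Compatible G s s' := by
    intro s hs s' hs' hne
    rcases hScomp s hs s' hs' hne with h | h | h
    · exact Or.inl h
    · exact Or.inr (Or.inl h)
    · exact Or.inr (Or.inr (far_of_reconn G t (hsub s hs) (hsub s' hs') h))
  -- case: s ∈ S unlinked vs s' ∪ t, s' ∈ S linked
  have key4 : ∀ s ∈ S, ¬ Linked G s t → ∀ s' ∈ S, Linked G s' t →
      Compatible G s (s' ∪ t) := by
    intro s hs hnl s' hs' hl
    obtain ⟨-, w1, hw1, u1, hu1, hadj1⟩ := hl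
    have hnoedge : ¬ ∃ v ∈ s, ∃ w ∈ t, G.Adj v w := fun h => hnl ⟨hdisj s hs, h⟩
    have hne : s ≠ s' := by
      rintro rfl
      exact hnoedge ⟨w1, hw1, u1, hu1, hadj1⟩
    rcases hScomp s hs s' hs' hne with h | h | h
    · exact Or.inl (h.trans Finset.subset_union_left)
    · exact absurd ⟨w1, h hw1, u1, hu1, hadj1⟩ hnoedge
    · exact Or.inr (Or.inr (far_symm G (far_union G
        (far_symm G (far_of_reconn G t (hsub s hs) (hsub s' hs') h))
        (far_ts s hs hnl))))
  -- case: both linked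
  have key5 : ∀ s ∈ S, Linked G s t → ∀ s' ∈ S, Linked G s' t → s ≠ s' →
      Compatible G (s ∪ t) (s' ∪ t) := by
    intro s hs hl s' hs' hl' hne
    rcases hScomp s hs s' hs' hne with h | h | h
    · exact Or.inl (Finset.union_subset_union h (Finset.Subset.refl t))
    · exact Or.inr (Or.inl (Finset.union_subset_union h (Finset.Subset.refl t)))
    · exact absurd h (not_far_both _ _ (hsub s hs) (hsub s' hs') hl.2 hl'.2)
  have compat_symm : ∀ p q, Compatible G p q → Compatible G q p := by
    intro p q h
    rcases h with h | h | h
    · exact Or.inr (Or.inl h)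
    · exact Or.inl h
    · exact Or.inr (Or.inr (far_symm G h))
  have hmem : ∀ x ∈ diamond G T t S, x ∈ T ∨ (x ∈ S ∧ ¬ Linked G x t) ∨
      ∃ s ∈ S, Linked G s t ∧ x = s ∪ t := by
    intro x hx
    simp only [diamond, Finset.mem_union, Finset.mem_filter, Finset.mem_image] at hx
    rcases hx with (h | h) | ⟨s, hsf, hx⟩
    · exact Or.inl h
    · exact Or.inr (Or.inl h)
    · exact Or.inr (Or.inr ⟨s, hsf.1, hsf.2, hx.symm⟩)
  refine ⟨Finset.mem_union_left _ (Finset.mem_union_left _ hTu), ?_, ?_⟩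
  · intro x hx
    rcases hmem x hx with h | ⟨h, hnl⟩ | ⟨s, hs, hl, rfl⟩
    · exact hTtube x h
    · exact tube_unlinked x h hnl
    · exact tube_union s hs hl
  · intro x hx y hy hxy
    rcases hmem x hx with hxT | ⟨hxS, hxnl⟩ | ⟨s, hsS, hsl, rfl⟩ <;>
      rcases hmem y hy with hyT | ⟨hyS, hynl⟩ | ⟨s', hs'S, hs'l, hy'⟩
    · exact hTcomp x hxT y hyT hxy
    · exact key1 x hxT y hyS hynl
    · exact hy' ▸ key2 x hxT s' hs'S hs'l
    · exact compat_symm _ _ (key1 y hyT x hxS hxnl)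
    · exact key3 x hxS y hyS hxy
    · exact hy' ▸ key4 x hxS hxnl s' hs'S hs'l
    · exact compat_symm _ _ (key2 y hyT s hsS hsl)
    · exact compat_symm _ _ (key4 y hyS hynl s hsS hsl)
    · subst hy'
      refine key5 s hsS hsl s' hs'S hs'l ?_
      rintro rfl
      exact hxy rfl
end
end

section
/- Let T be a tubing of a finite connected simple graph Γ, and let t, t' ∈ T be two (possibly nested, possibly disjoint) tubes of T. For any tubings S of (Γ_t)_{T|_t}^* and S' of (Γ_{t'})_{T|_{t'}}^*, one has: (1) t' is a tube of the tubing γ_t(T;S) and t is a tube of γ_{t'}(T;S'); and (2) γ_{t'}(γ_t(T;S); S') = γ_t(γ_{t'}(T;S'); S). -/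
open scoped Classical
open TensorProduct

noncomputable section

namespace CDTub

lemma exists_maximal_sup (P : Finset (Finset ℕ)) {s : Finset ℕ} (hs : s ∈ P) :
    ∃ m ∈ P, s ⊆ m ∧ ∀ s' ∈ P, m ⊆ s' → m = s' := by
  classical
  obtain ⟨m, hm, hmax⟩ := Finset.exists_max_image (P.filter (fun x => s ⊆ x)) Finset.card
    ⟨s, Finset.mem_filter.mpr ⟨hs, subset_rfl⟩⟩
  rw [Finset.mem_filter] at hm
  refine ⟨m, hm.1, hm.2, fun s' hs' hsub => ?_⟩
  have hmem : s' ∈ P.filter (fun x => s ⊆ x) :=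
    Finset.mem_filter.mpr ⟨hs', hm.2.trans hsub⟩
  exact Finset.eq_of_subset_of_card_le hsub (hmax s' hmem)

lemma subst_mem_classify (G : FinGraph)
    (T : Finset (Finset ℕ)) (hT : IsTubing G T)
    (t t' : Finset ℕ) (ht : t ∈ T) (ht' : t' ∈ T) (hne : t ≠ t')
    (S : Finset (Finset ℕ))
    (hS : IsTubing (gammaStar (induce G t) (restrictT T t)) S) :
    ∀ a ∈ restrictT (T ∪ substT (induce G t) (restrictT T t) S) t',
      a ∈ restrictT T t' ∨ (a ⊆ t ∧ t ⊆ t') := by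
  classical
  intro a ha
  rw [restrictT, Finset.mem_filter, Finset.mem_union] at ha
  obtain ⟨hmem, hat'⟩ := ha
  rcases hmem with haT | haA
  · exact Or.inl (Finset.mem_filter.mpr ⟨haT, hat'⟩)
  rw [substT, Finset.mem_union] at haA
  rcases haA with haR | haI
  · exact Or.inl (Finset.mem_filter.mpr ⟨(Finset.mem_filter.mp haR).1, hat'⟩)
  obtain ⟨s, hsS, rfl⟩ := Finset.mem_image.mp haI
  have hstube := hT.2.1 s
  have hsT : IsTube (gammaStar (induce G t) (restrictT T t)) s := hS.2.1 s hsS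
  have hsne : s.Nonempty := hsT.1
  have hsv : s ⊆ (gammaStar (induce G t) (restrictT T t)).verts := hsT.2.1
  have hsdiff : s ⊆ t \ (MaxtP (induce G t) (restrictT T t)).biUnion id := hsv
  have hst : s ⊆ t := fun v hv => (Finset.mem_sdiff.mp (hsdiff hv)).1
  have hmaxsub : ∀ m ∈ MaxtP (induce G t) (restrictT T t), m ⊆ t := by
    intro m hm
    have : m ∈ restrictT T t :=
      (Finset.mem_filter.mp (Finset.mem_filter.mp hm).1).1
    exact (Finset.mem_filter.mp this).2
  have hat : tildeT (induce G t) (restrictT T t) s ⊆ t := by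
    intro v hv
    rw [tildeT, Finset.mem_union] at hv
    rcases hv with hv | hv
    · exact hst hv
    · obtain ⟨m, hm, hvm⟩ := Finset.mem_biUnion.mp hv
      exact hmaxsub m (Finset.mem_filter.mp hm).1 hvm
  have hsa : s ⊆ tildeT (induce G t) (restrictT T t) s := Finset.subset_union_left
  rcases hT.2.2 t ht t' ht' hne with h | h | h
  · exact Or.inr ⟨hat, h⟩
  · -- t' ⊆ t : contradiction
    exfalso
    have ht'P : t' ∈ properTubes (induce G t) (restrictT T t) := by
      rw [properTubes, Finset.mem_filter]
      refine ⟨Finset.mem_filter.mpr ⟨ht', h⟩, fun heq => ?_⟩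
      exact hne (heq : t' = t).symm
    obtain ⟨m, hmP, ht'm, hmmax⟩ := exists_maximal_sup _ ht'P
    have hmM : m ∈ MaxtP (induce G t) (restrictT T t) :=
      Finset.mem_filter.mpr ⟨hmP, hmmax⟩
    obtain ⟨v, hv⟩ := hsne
    have hvm : v ∈ m := ht'm (hat' (hsa hv))
    have : v ∉ (MaxtP (induce G t) (restrictT T t)).biUnion id :=
      (Finset.mem_sdiff.mp (hsdiff hv)).2
    exact this (Finset.mem_biUnion.mpr ⟨m, hmM, hvm⟩)
  · -- far apart : contradiction
    exfalso
    obtain ⟨v, hv⟩ := hsne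
    exact Finset.disjoint_left.mp h.1 (hst hv) (hat' (hsa hv))

lemma maxtp_stable (G : FinGraph)
    (T : Finset (Finset ℕ)) (hT : IsTubing G T)
    (t t' : Finset ℕ) (ht : t ∈ T) (ht' : t' ∈ T) (hne : t ≠ t')
    (S : Finset (Finset ℕ))
    (hS : IsTubing (gammaStar (induce G t) (restrictT T t)) S) :
    MaxtP (induce G t') (restrictT (T ∪ substT (induce G t) (restrictT T t) S) t')
      = MaxtP (induce G t') (restrictT T t') := by
  classical
  set A := substT (induce G t) (restrictT T t) S with hA
  set R := restrictT T t' with hR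
  set R' := restrictT (T ∪ A) t' with hR'
  have classify := subst_mem_classify G T hT t t' ht ht' hne S hS
  have hRR' : R ⊆ R' := by
    intro x hx
    rw [hR, restrictT, Finset.mem_filter] at hx
    exact Finset.mem_filter.mpr ⟨Finset.mem_union_left _ hx.1, hx.2⟩
  have hPP' : properTubes (induce G t') R ⊆ properTubes (induce G t') R' := by
    intro x hx
    rw [properTubes, Finset.mem_filter] at hx ⊢
    exact ⟨hRR' hx.1, hx.2⟩
  -- if t ⊆ t', then t is a proper tube of R
  have htP : t ⊆ t' → t ∈ properTubes (induce G t') R := by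
    intro hsub
    rw [properTubes, Finset.mem_filter]
    exact ⟨Finset.mem_filter.mpr ⟨ht, hsub⟩, hne⟩
  -- classification of proper tubes of R'
  have classifyP : ∀ x ∈ properTubes (induce G t') R',
      x ∈ properTubes (induce G t') R ∨ (x ⊆ t ∧ t ⊆ t') := by
    intro x hx
    rw [properTubes, Finset.mem_filter] at hx
    rcases classify x hx.1 with hxR | hxt
    · exact Or.inl (Finset.mem_filter.mpr ⟨hxR, hx.2⟩)
    · exact Or.inr hxt
  apply Finset.Subset.antisymm
  · intro m hm
    rw [MaxtP, Finset.mem_filter] at hm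
    obtain ⟨hmP', hmmax⟩ := hm
    have hmR : m ∈ properTubes (induce G t') R := by
      rcases classifyP m hmP' with h | ⟨hmt, htt'⟩
      · exact h
      · have heq := hmmax t (hPP' (htP htt')) hmt
        rw [heq]; exact htP htt'
    rw [MaxtP, Finset.mem_filter]
    exact ⟨hmR, fun s' hs' hsub => hmmax s' (hPP' hs') hsub⟩
  · intro m hm
    rw [MaxtP, Finset.mem_filter] at hm
    obtain ⟨hmP, hmmax⟩ := hm
    rw [MaxtP, Finset.mem_filter]
    refine ⟨hPP' hmP, fun s' hs' hsub => ?_⟩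
    rcases classifyP s' hs' with h | ⟨hs't, htt'⟩
    · exact hmmax s' h hsub
    · have hmt : m = t := hmmax t (htP htt') (hsub.trans hs't)
      exact hmt ▸ Finset.Subset.antisymm (hmt ▸ hsub) hs't

lemma gammaSub_step (G : FinGraph)
    (T : Finset (Finset ℕ)) (hT : IsTubing G T)
    (t t' : Finset ℕ) (ht : t ∈ T) (ht' : t' ∈ T) (hne : t ≠ t')
    (S S' : Finset (Finset ℕ))
    (hS : IsTubing (gammaStar (induce G t) (restrictT T t)) S) :
    gammaSub G (gammaSub G T t S) t' S'
      = T ∪ S.image (tildeT (induce G t) (restrictT T t))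
          ∪ S'.image (tildeT (induce G t') (restrictT T t')) := by
  classical
  set A := substT (induce G t) (restrictT T t) S with hA
  have hmax := maxtp_stable G T hT t t' ht ht' hne S hS
  have htilde : tildeT (induce G t') (restrictT (T ∪ A) t')
      = tildeT (induce G t') (restrictT T t') := by
    funext s
    rw [tildeT, tildeT, hmax]
  have h1 : gammaSub G (gammaSub G T t S) t' S'
      = (T ∪ A) ∪ (restrictT (T ∪ A) t'
          ∪ S'.image (tildeT (induce G t') (restrictT (T ∪ A) t'))) := rfl
  rw [htilde] at h1
  rw [h1]
  have h2 : (T ∪ A) ∪ restrictT (T ∪ A) t' = T ∪ A :=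
    Finset.union_eq_left.mpr (Finset.filter_subset _ _)
  rw [← Finset.union_assoc, h2]
  have h3 : T ∪ A = T ∪ S.image (tildeT (induce G t) (restrictT T t)) := by
    rw [hA, substT, ← Finset.union_assoc]
    have h4 : T ∪ restrictT T t = T :=
      Finset.union_eq_left.mpr (Finset.filter_subset _ _)
    rw [h4]
  rw [h3]

end CDTub

open CDTub in
/-- Independence of substitutions at different tubes: for tubes `t, t'` of a tubing `T`
and tubings `S` of `(Γ_t)_{T|_t}^*`, `S'` of `(Γ_{t'})_{T|_{t'}}^*`, one has
`t' ∈ γ_t(T;S)` and `t ∈ γ_{t'}(T;S')`, and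
`γ_{t'}(γ_t(T;S);S') = γ_t(γ_{t'}(T;S');S)`. -/
theorem gamma_comm (G : FinGraph) (hc : IsConnGraph G)
    (T : Finset (Finset ℕ)) (hT : IsTubing G T)
    (t t' : Finset ℕ) (ht : t ∈ T) (ht' : t' ∈ T) (hne : t ≠ t')
    (S S' : Finset (Finset ℕ))
    (hS : IsTubing (gammaStar (induce G t) (restrictT T t)) S)
    (hS' : IsTubing (gammaStar (induce G t') (restrictT T t')) S') :
    t' ∈ gammaSub G T t S ∧ t ∈ gammaSub G T t' S' ∧
    gammaSub G (gammaSub G T t S) t' S' = gammaSub G (gammaSub G T t' S') t S := by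
  refine ⟨Finset.mem_union_left _ ht', Finset.mem_union_left _ ht, ?_⟩
  rw [gammaSub_step G T hT t t' ht ht' hne S S' hS,
    gammaSub_step G T hT t' t ht' ht hne.symm S' S hS']
  rw [Finset.union_assoc, Finset.union_assoc,
    Finset.union_comm (S.image _) (S'.image _)]
end
end
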